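/- Suppose an ℝ-irreducible local system W_ℝ underlying a polarized real VHS becomes reducible over ℂ, so W_ℝ ⊗ ℂ = V ⊕ V̄. Then every Lyapunov exponent of W_ℝ occurs with even multiplicity. -/
import Mathlib


open Filter

private lemma aux_log_bound {a b C : ℝ} (ha : 0 ≤ a) (hC : 1 ≤ C)
    (h1 : b ≤ 2 * a) (h2 : a ≤ C * b) :
    |Real.log b - Real.log a| ≤ max (Real.log 2) (Real.log C) := by
  have hlog2 : (0:ℝ) ≤ Real.log 2 := Real.log_nonneg one_le_two
  rcases eq_or_lt_of_le ha with h0 | h0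
  · have hb0 : b = 0 := by nlinarith
    rw [← h0, hb0]
    simpa using hlog2.trans (le_max_left _ _)
  · have hb : 0 < b := by nlinarith
    rw [abs_sub_le_iff]
    constructor
    · have : Real.log b ≤ Real.log 2 + Real.log a := by
        calc Real.log b ≤ Real.log (2 * a) := Real.log_le_log hb h1
          _ = Real.log 2 + Real.log a := Real.log_mul two_ne_zero (ne_of_gt h0)
      have := sub_le_iff_le_add.mpr this
      exact this.trans (le_max_left _ _)
    · have : Real.log a ≤ Real.log C + Real.log b := by
        calc Real.log a ≤ Real.log (C * b) := Real.log_le_log h0 h2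
          _ = Real.log C + Real.log b := Real.log_mul (by linarith) (ne_of_gt hb)
      have := sub_le_iff_le_add.mpr this
      exact this.trans (le_max_right _ _)

private lemma aux_transfer {f g : ℝ → ℝ} {M lam : ℝ} {l : Filter ℝ}
    (hinv : Tendsto (fun t : ℝ => |t|⁻¹) l (nhds 0))
    (h : ∀ t, |g t - f t| ≤ M)
    (hf : Tendsto (fun t => f t / t) l (nhds lam)) :
    Tendsto (fun t => g t / t) l (nhds lam) := by
  have h0 : Tendsto (fun t => (g t - f t) / t) l (nhds 0) := by
    have hM : Tendsto (fun t : ℝ => M * |t|⁻¹) l (nhds 0) := by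
      simpa using hinv.const_mul M
    refine squeeze_zero_norm (fun t => ?_) hM
    have he : ‖(g t - f t) / t‖ = |g t - f t| * |t|⁻¹ := by
      rw [Real.norm_eq_abs, abs_div, div_eq_mul_inv]
    rw [he]
    exact mul_le_mul_of_nonneg_right (h t) (by positivity)
  have hadd := hf.add h0
  rw [add_zero] at hadd
  exact hadd.congr fun t => by ring

set_option maxHeartbeats 1000000 in
theorem duplication_of_exponents
    {E : Type*} [NormedAddCommGroup E] [NormedSpace ℂ E] [FiniteDimensional ℂ E]
    (σ : E →ₗ[ℝ] E)
    (hσσ : ∀ v, σ (σ v) = v)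
    (hσsmul : ∀ (c : ℂ) (v : E), σ (c • v) = (starRingEnd ℂ) c • σ v)
    (hσnorm : ∀ v, ‖σ v‖ = ‖v‖)
    (G : ℝ → E →ₗ[ℂ] E)
    (hGσ : ∀ t v, G t (σ v) = σ (G t v))
    (V : Submodule ℂ E)
    (hVinv : ∀ t : ℝ, ∀ v ∈ V, G t v ∈ V)
    (hdecomp : ∀ w : E, ∃ v v' : E, v ∈ V ∧ v' ∈ V ∧ w = v + σ v')
    (hVcap : ∀ v ∈ V, σ v ∈ V → v = 0)
    (lam : ℝ)
    (Wlam : Submodule ℝ E)   -- the Oseledets subspace of the real form `W_ℝ` for `λ`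
    (hW : ∀ w : E, w ∈ Wlam ↔ (σ w = w ∧ (w = 0 ∨
        (Tendsto (fun t => Real.log ‖G t w‖ / t) atTop (nhds lam) ∧
         Tendsto (fun t => Real.log ‖G t w‖ / t) atBot (nhds lam)))))
    (Ulam : Submodule ℂ E)   -- the Oseledets subspace of `V` for `λ`
    (hU : ∀ v : E, v ∈ Ulam ↔ (v ∈ V ∧ (v = 0 ∨
        (Tendsto (fun t => Real.log ‖G t v‖ / t) atTop (nhds lam) ∧
         Tendsto (fun t => Real.log ‖G t v‖ / t) atBot (nhds lam))))) :
    Even (Module.finrank ℝ Wlam) := by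
  classical
  haveI : FiniteDimensional ℝ E := FiniteDimensional.trans ℝ ℂ E
  -- Step 1: a uniform constant `C` with `‖x‖ ≤ C * ‖x + σ x‖` for `x ∈ V`.
  set V' : Submodule ℝ E := V.restrictScalars ℝ with hV'def
  let T : V' →ₗ[ℝ] E :=
    { toFun := fun x => (x : E) + σ x
      map_add' := fun x y => by
        simp only [Submodule.coe_add, map_add]; abel
      map_smul' := fun r x => by
        simp only [Submodule.coe_smul, map_smul, RingHom.id_apply, smul_add] }
  have hTinj : Function.Injective T := by
    refine LinearMap.ker_eq_bot.mp ((Submodule.eq_bot_iff _).mpr fun x hx => ?_)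
    have hx0 : (x : E) + σ (x : E) = 0 := hx
    have hσx : σ (x : E) = -(x : E) := eq_neg_of_add_eq_zero_right hx0
    have hxV : (x : E) ∈ V := x.2
    have : (x : E) = 0 := hVcap _ hxV (by rw [hσx]; exact V.neg_mem hxV)
    exact Subtype.ext this
  let e := LinearEquiv.ofInjective T hTinj
  let P : LinearMap.range T →ₗ[ℝ] V' := e.symm.toLinearMap
  have hPc : Continuous P := P.continuous_of_finiteDimensional
  let Pc : LinearMap.range T →L[ℝ] V' := ⟨P, hPc⟩
  set C : ℝ := max ‖Pc‖ 1 with hCdef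
  have hC1 : 1 ≤ C := le_max_right _ _
  have hkey : ∀ x ∈ V, ‖x‖ ≤ C * ‖x + σ x‖ := by
    intro x hx
    have h1 : ‖Pc (e ⟨x, hx⟩)‖ ≤ ‖Pc‖ * ‖e ⟨x, hx⟩‖ := Pc.le_opNorm _
    have h2 : ‖Pc (e ⟨x, hx⟩)‖ = ‖x‖ := by
      have : Pc (e ⟨x, hx⟩) = ⟨x, hx⟩ := e.symm_apply_apply _
      rw [this]
      rfl
    have h3 : ‖e ⟨x, hx⟩‖ = ‖x + σ x‖ := by
      have : ((e ⟨x, hx⟩ : LinearMap.range T) : E) = T ⟨x, hx⟩ :=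
        LinearEquiv.ofInjective_apply T _
      calc ‖e ⟨x, hx⟩‖ = ‖((e ⟨x, hx⟩ : LinearMap.range T) : E)‖ := rfl
        _ = ‖x + σ x‖ := by rw [this]; rfl
    rw [h2, h3] at h1
    exact h1.trans (mul_le_mul_of_nonneg_right (le_max_left _ _) (norm_nonneg _))
  -- Step 2: pointwise log bound along the cocycle
  set M : ℝ := max (Real.log 2) (Real.log C) with hMdef
  have hbound : ∀ v ∈ V, ∀ t : ℝ,
      |Real.log ‖G t (v + σ v)‖ - Real.log ‖G t v‖| ≤ M := by
    intro v hv t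
    have hGt : G t (v + σ v) = G t v + σ (G t v) := by rw [map_add, hGσ]
    have hGv : G t v ∈ V := hVinv t v hv
    refine aux_log_bound (norm_nonneg _) hC1 ?_ ?_
    · rw [hGt]
      calc ‖G t v + σ (G t v)‖ ≤ ‖G t v‖ + ‖σ (G t v)‖ := norm_add_le _ _
        _ = 2 * ‖G t v‖ := by rw [hσnorm]; ring
    · rw [hGt]; exact hkey _ hGv
  have hinvTop : Tendsto (fun t : ℝ => |t|⁻¹) atTop (nhds 0) :=
    tendsto_abs_atTop_atTop.inv_tendsto_atTop
  have hinvBot : Tendsto (fun t : ℝ => |t|⁻¹) atBot (nhds 0) :=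
    tendsto_abs_atBot_atTop.inv_tendsto_atTop
  -- Step 3: the isomorphism `u ↦ u + σ u` from `Ulam` onto `Wlam`.
  set U' : Submodule ℝ E := Ulam.restrictScalars ℝ with hU'def
  let S : U' →ₗ[ℝ] E :=
    { toFun := fun u => (u : E) + σ u
      map_add' := fun x y => by
        simp only [Submodule.coe_add, map_add]; abel
      map_smul' := fun r x => by
        simp only [Submodule.coe_smul, map_smul, RingHom.id_apply, smul_add] }
  have hUlamV : ∀ u : E, u ∈ Ulam → u ∈ V := fun u hu => ((hU u).mp hu).1
  have hSinj : Function.Injective S := by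
    refine LinearMap.ker_eq_bot.mp ((Submodule.eq_bot_iff _).mpr fun x hx => ?_)
    have hx0 : (x : E) + σ (x : E) = 0 := hx
    have hσx : σ (x : E) = -(x : E) := eq_neg_of_add_eq_zero_right hx0
    have hxV : (x : E) ∈ V := hUlamV _ x.2
    have : (x : E) = 0 := hVcap _ hxV (by rw [hσx]; exact V.neg_mem hxV)
    exact Subtype.ext this
  have hrange : LinearMap.range S = Wlam := by
    apply le_antisymm
    · rintro _ ⟨u, rfl⟩
      have huV : (u : E) ∈ V := hUlamV _ u.2
      refine (hW _).mpr ⟨?_, ?_⟩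
      · show σ ((u : E) + σ (u : E)) = (u : E) + σ (u : E)
        rw [map_add, hσσ, add_comm]
      · rcases ((hU _).mp u.2).2 with h0 | ⟨ht, hb⟩
        · left
          show (u : E) + σ (u : E) = 0
          rw [h0, map_zero, add_zero]
        · right
          exact ⟨aux_transfer hinvTop (fun t => hbound _ huV t) ht,
                 aux_transfer hinvBot (fun t => hbound _ huV t) hb⟩
    · intro w hw
      obtain ⟨hσw, hgrow⟩ := (hW w).mp hw
      obtain ⟨v, v', hv, hv', rfl⟩ := hdecomp w
      -- from `σ w = w` deduce `v = v'`
      have hσw' : σ v + v' = v + σ v' := by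
        have h := hσw
        rw [map_add, hσσ] at h
        exact h
      have hdiff : v - v' = 0 := by
        refine hVcap _ (V.sub_mem hv hv') ?_
        have hfix : σ (v - v') = v - v' := by
          rw [map_sub]
          exact sub_eq_sub_iff_add_eq_add.mpr hσw'
        rw [hfix]; exact V.sub_mem hv hv'
      have hvv' : v' = v := by
        have := sub_eq_zero.mp hdiff
        exact this.symm
      subst hvv'
      -- now `w = v' + σ v'` with `v' ∈ V`
      have hvU : v' ∈ Ulam := by
        refine (hU _).mpr ⟨hv', ?_⟩
        rcases hgrow with h0 | ⟨ht, hb⟩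
        · left
          have hσv : σ v' = -v' := eq_neg_of_add_eq_zero_right h0
          exact hVcap _ hv' (by rw [hσv]; exact V.neg_mem hv')
        · right
          have hb' : ∀ t : ℝ,
              |Real.log ‖G t v'‖ - Real.log ‖G t (v' + σ v')‖| ≤ M := by
            intro t
            rw [abs_sub_comm]
            exact hbound _ hv' t
          exact ⟨aux_transfer hinvTop hb' ht, aux_transfer hinvBot hb' hb⟩
      exact ⟨⟨v', hvU⟩, rfl⟩
  -- Step 4: count dimensions
  have h1 : Module.finrank ℝ Wlam = Module.finrank ℝ U' := by
    rw [← hrange, LinearMap.finrank_range_of_inj hSinj]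
  have h2 : Module.finrank ℝ U' = 2 * Module.finrank ℂ Ulam := by
    have ht : Module.finrank ℝ ℂ * Module.finrank ℂ Ulam = Module.finrank ℝ Ulam :=
      Module.finrank_mul_finrank ℝ ℂ Ulam
    rw [Complex.finrank_real_complex] at ht
    exact ht.symm
  rw [h1, h2]
  exact ⟨Module.finrank ℂ Ulam, two_mul _⟩
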